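/- Let N ≥ 4, let f_1,...,f_{N−1} be commuting indeterminates, β_1,...,β_{N−2} real constants, and λ a parameter. Define F_m(λ) = ∏_{n=m}^{N−2} (1 + (λ + β_n) ∂²/∂f_n ∂f_{n+1}) applied to the monomial f_m f_{m+1} ⋯ f_{N−1}, for 1 ≤ m ≤ N−2, and F_{N−1}(λ) = f_{N−1}. Then the three-term recursion F_m(λ) = f_m F_{m+1}(λ) + (λ + β_m) F_{m+2}(λ) holds for 1 ≤ m ≤ N−3, and ∂F_m(λ)/∂f_m = F_{m+1}(λ) holds for 1 ≤ m ≤ N−2. -/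

import Mathlib

/-- The Veselov–Shabat operator 1 + (λ + β_n) ∂²/∂f_n ∂f_{n+1} on the polynomial ring
in the variables f_1, f_2, … over ℝ[λ]. -/
noncomputable def vsOp (β : ℕ → ℝ) (n : ℕ) (p : MvPolynomial ℕ (Polynomial ℝ)) :
    MvPolynomial ℕ (Polynomial ℝ) :=
  p + MvPolynomial.C (Polynomial.X + Polynomial.C (β n)) *
      MvPolynomial.pderiv n (MvPolynomial.pderiv (n + 1) p)

/-- F_m(λ) = ∏_{n=m}^{N−2} (1 + (λ + β_n) ∂²/∂f_n ∂f_{n+1}) (f_m f_{m+1} ⋯ f_{N−1});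
for m = N−1 this is just f_{N−1}. -/
noncomputable def vsF (β : ℕ → ℝ) (N m : ℕ) : MvPolynomial ℕ (Polynomial ℝ) :=
  (List.range' m (N - 1 - m)).foldr (vsOp β)
    (∏ n ∈ Finset.Icc m (N - 1), MvPolynomial.X n)

section Aux
open MvPolynomial

lemma my_pderiv_comm {σ R : Type*} [CommSemiring R] (i j : σ) (p : MvPolynomial σ R) :
    pderiv i (pderiv j p) = pderiv j (pderiv i p) := by
  induction p using MvPolynomial.induction_on' with
  | add p q hp hq => simp [map_add, hp, hq]
  | monomial s a =>
    classical
    rcases eq_or_ne i j with rfl | h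
    · rfl
    · simp only [pderiv_monomial]
      rw [tsub_right_comm]
      congr 1
      rw [Finsupp.tsub_apply, Finsupp.tsub_apply,
        Finsupp.single_eq_of_ne h, Finsupp.single_eq_of_ne h.symm]
      simp only [Nat.sub_zero]
      ring

lemma pderiv_prod_X {s : Finset ℕ} {k : ℕ} (hk : k ∉ s) :
    pderiv k (∏ n ∈ s, (X n : MvPolynomial ℕ (Polynomial ℝ))) = 0 := by
  classical
  induction s using Finset.induction_on with
  | empty => simp
  | @insert a t h ih =>
    simp only [Finset.mem_insert, not_or] at hk
    rw [Finset.prod_insert h, pderiv_mul, ih hk.2,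
      pderiv_X_of_ne (Ne.symm hk.1)]
    simp

lemma vsOp_pderiv_zero {β : ℕ → ℝ} {k n : ℕ} {p : MvPolynomial ℕ (Polynomial ℝ)}
    (h : pderiv k p = 0) : pderiv k (vsOp β n p) = 0 := by
  unfold vsOp
  rw [map_add, h, pderiv_C_mul, my_pderiv_comm k n, my_pderiv_comm k (n+1), h]
  simp

lemma foldr_vsOp_pderiv_zero {β : ℕ → ℝ} {k : ℕ} (l : List ℕ)
    {p : MvPolynomial ℕ (Polynomial ℝ)} (h : pderiv k p = 0) :
    pderiv k (l.foldr (vsOp β) p) = 0 := by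
  induction l with
  | nil => exact h
  | cons a l ih => exact vsOp_pderiv_zero ih

lemma vsF_pderiv_lt {β : ℕ → ℝ} {N k m : ℕ} (hk : k < m) :
    pderiv k (vsF β N m) = 0 := by
  unfold vsF
  exact foldr_vsOp_pderiv_zero _ (pderiv_prod_X (by simp; omega))

lemma vsOp_X_mul {β : ℕ → ℝ} {m n : ℕ} (h1 : m ≠ n) (h2 : m ≠ n + 1)
    (p : MvPolynomial ℕ (Polynomial ℝ)) :
    vsOp β n (X m * p) = X m * vsOp β n p := by
  unfold vsOp
  rw [pderiv_mul, pderiv_X_of_ne h2, zero_mul, zero_add, pderiv_mul, pderiv_X_of_ne h1]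
  ring

lemma foldr_vsOp_X_mul {β : ℕ → ℝ} {m : ℕ} (l : List ℕ) (hl : ∀ n ∈ l, m < n)
    (p : MvPolynomial ℕ (Polynomial ℝ)) :
    l.foldr (vsOp β) (X m * p) = X m * l.foldr (vsOp β) p := by
  induction l with
  | nil => rfl
  | cons a l ih =>
    have ha := hl a (by simp)
    simp only [List.foldr_cons, ih (fun n hn => hl n (by simp [hn]))]
    exact vsOp_X_mul (by omega) (by omega) _

lemma vsF_formula {β : ℕ → ℝ} {N m : ℕ} (hm : m + 2 ≤ N) :
    vsF β N m = X m * vsF β N (m + 1)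
      + C (Polynomial.X + Polynomial.C (β m)) * pderiv (m + 1) (vsF β N (m + 1)) := by
  have h1 : N - 1 - m = (N - 1 - (m + 1)) + 1 := by omega
  have h2 : (Finset.Icc m (N - 1)) = insert m (Finset.Icc (m + 1) (N - 1)) := by
    rw [Finset.Icc_add_one_left_eq_Ioc, Finset.Ioc_insert_left (by omega)]
  have h3 : m ∉ Finset.Icc (m + 1) (N - 1) := by simp
  unfold vsF
  rw [h1, List.range'_succ, List.foldr_cons, h2, Finset.prod_insert h3,
    foldr_vsOp_X_mul _ (fun n hn => by simp [List.mem_range'_1] at hn; omega)]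
  set q : MvPolynomial ℕ (Polynomial ℝ) :=
    (List.range' (m + 1) (N - 1 - (m + 1))).foldr (vsOp β)
      (∏ n ∈ Finset.Icc (m + 1) (N - 1), X n) with hq
  have hq0 : pderiv m q = 0 := vsF_pderiv_lt (Nat.lt_succ_self m)
  unfold vsOp
  rw [pderiv_mul, pderiv_X_of_ne (by omega), zero_mul, zero_add, pderiv_mul, pderiv_X_self,
    my_pderiv_comm m (m + 1), hq0]
  simp [mul_comm]

end Aux

open MvPolynomial in
/-- the three-term recursion F_m(λ) = f_m F_{m+1}(λ) + (λ+β_m) F_{m+2}(λ)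
for 1 ≤ m ≤ N−3, and ∂F_m(λ)/∂f_m = F_{m+1}(λ) for 1 ≤ m ≤ N−2. -/
theorem vsF_three_term_recursion (N : ℕ) (hN : 4 ≤ N) (β : ℕ → ℝ) :
    (∀ m : ℕ, 1 ≤ m → m ≤ N - 3 →
      vsF β N m
        = MvPolynomial.X m * vsF β N (m + 1)
          + MvPolynomial.C (Polynomial.X + Polynomial.C (β m)) * vsF β N (m + 2)) ∧
    (∀ m : ℕ, 1 ≤ m → m ≤ N - 2 →
      MvPolynomial.pderiv m (vsF β N m) = vsF β N (m + 1)) := by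
  have part2 : ∀ m : ℕ, m + 2 ≤ N → pderiv m (vsF β N m) = vsF β N (m + 1) := by
    intro m hm
    rw [vsF_formula hm, map_add, pderiv_mul, pderiv_X_self, pderiv_C_mul,
      vsF_pderiv_lt (Nat.lt_succ_self m), my_pderiv_comm m (m + 1),
      vsF_pderiv_lt (Nat.lt_succ_self m)]
    simp
  refine ⟨fun m hm1 hm2 => ?_, fun m hm1 hm2 => part2 m (by omega)⟩
  rw [vsF_formula (by omega), part2 (m + 1) (by omega)]
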